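/- There is an absolute constant c > 0 such that for all integers N ≥ 1 and M ≥ 4, there exists a 2D SLP of size at most c·(log₂ N + log₂ M) deriving the 2D string C_{N,M}. -/

import Mathlib

/-!
## Two-dimensional strings.
A 2D string over alphabet `A` of size `h × w` is represented canonically:
`f i j` is `some` of the character in (0-indexed) row `i`, column `j` when
`i < h` and `j < w`, and `none` outside of the rectangle.  All operations
below produce such canonical representations, so equality of 2D strings
built from them coincides with equality of the dimensions and of all entries.
-/
structure Str2 (A : Type) where
  h : ℕ
  w : ℕ
  f : ℕ → ℕ → Option A

namespace Str2

variable {A : Type}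

/-- Canonical constructor: pads with `none` outside of the `h × w` rectangle. -/
def mk' (h w : ℕ) (g : ℕ → ℕ → Option A) : Str2 A :=
  ⟨h, w, fun i j => if i < h ∧ j < w then g i j else none⟩

/-- The empty 2D string. -/
def empty : Str2 A := ⟨0, 0, fun _ _ => none⟩

/-- The `1 × 1` 2D string consisting of a single character. -/
def single (a : A) : Str2 A := mk' 1 1 fun _ _ => some a

/-- Horizontal concatenation `S ⊞ T` (meaningful when the heights agree). -/
def hcat (S T : Str2 A) : Str2 A :=
  mk' S.h (S.w + T.w) fun i j => if j < S.w then S.f i j else T.f i (j - S.w)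

/-- Vertical concatenation `S ⊟ T` (meaningful when the widths agree). -/
def vcat (S T : Str2 A) : Str2 A :=
  mk' (S.h + T.h) S.w fun i j => if i < S.h then S.f i j else T.f (i - S.h) j

/-- Horizontal concatenation `S₁ ⊞ S₂ ⊞ ⋯ ⊞ S_k` of a list of 2D strings. -/
def hcatList : List (Str2 A) → Str2 A
  | [] => empty
  | S :: rest => rest.foldl hcat S

/-- Vertical concatenation `S₁ ⊟ S₂ ⊟ ⋯ ⊟ S_k` of a list of 2D strings. -/
def vcatList : List (Str2 A) → Str2 A
  | [] => empty
  | S :: rest => rest.foldl vcat S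

/-- The transpose. -/
def transpose (S : Str2 A) : Str2 A := mk' S.w S.h fun i j => S.f j i

/-- The `i`-th row (0-indexed) of `S`, as a `1 × w` 2D string. -/
def rowStr (S : Str2 A) (i : ℕ) : Str2 A := mk' 1 S.w fun _ j => S.f i j

/-- The `j`-th column (0-indexed) of `S`, read top to bottom, as a `1 × h` 2D string. -/
def colStr (S : Str2 A) (j : ℕ) : Str2 A := mk' 1 S.h fun _ i => S.f i j

/-- A height-one 2D string, viewed as an ordinary (1D) string, i.e. a list. -/
def toList (S : Str2 A) : List A := (List.range S.w).filterMap fun j => S.f 0 j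

/-- An ordinary (1D) string viewed as a height-one 2D string. -/
def ofList (l : List A) : Str2 A := mk' 1 l.length fun _ j => l[j]?

/-- The concatenation of all rows of `S` from top to bottom,
as a height-one 2D string of width `h * w`. -/
def rowsConcat (S : Str2 A) : Str2 A :=
  mk' 1 (S.h * S.w) fun _ j => S.f (j / S.w) (j % S.w)

end Str2

/-- The right-hand side of a production of a 2D SLP: a single character,
a horizontal concatenation of two nonterminals, or a vertical concatenation
of two nonterminals. -/
inductive Rhs2 (A V : Type) where
  | chr : A → Rhs2 A V
  | horiz : V → V → Rhs2 A V
  | vert : V → V → Rhs2 A V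

/-- A two-dimensional straight-line program over the alphabet `A`:
a finite set `V` of nonterminals, a starting nonterminal, and a production
map `rhs`.  Acyclicity of the relation "appears in the right-hand side of"
is witnessed by the function `rank`, which strictly decreases from the
left-hand side of each production to the nonterminals on its right-hand side. -/
structure SLP2 (A : Type) where
  V : Type
  fintypeV : Fintype V
  start : V
  rhs : V → Rhs2 A V
  rank : V → ℕ
  rank_horiz : ∀ {X Y Z}, rhs X = Rhs2.horiz Y Z → rank Y < rank X ∧ rank Z < rank X
  rank_vert : ∀ {X Y Z}, rhs X = Rhs2.vert Y Z → rank Y < rank X ∧ rank Z < rank X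

namespace SLP2

variable {A : Type}

/-- Fuel-based evaluation of expansions (with enough fuel it computes the
unique expansion of a nonterminal). -/
def expAux (G : SLP2 A) : ℕ → G.V → Str2 A
  | 0, _ => Str2.empty
  | n + 1, X =>
    match G.rhs X with
    | .chr a => Str2.single a
    | .horiz Y Z => (G.expAux n Y).hcat (G.expAux n Z)
    | .vert Y Z => (G.expAux n Y).vcat (G.expAux n Z)

/-- The (unique) expansion of a nonterminal `X`: since `rank` strictly
decreases along productions, fuel `rank X + 1` always suffices. -/
def expNT (G : SLP2 A) (X : G.V) : Str2 A := G.expAux (G.rank X + 1) X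

/-- The 2D string derived by the SLP. -/
def exp (G : SLP2 A) : Str2 A := G.expNT G.start

/-- Fuel-based computation of the depth of the derivation tree below a
nonterminal (a node labeled by a production `chr σ` has a single leaf child). -/
def depthAux (G : SLP2 A) : ℕ → G.V → ℕ
  | 0, _ => 0
  | n + 1, X =>
    match G.rhs X with
    | .chr _ => 1
    | .horiz Y Z => 1 + max (G.depthAux n Y) (G.depthAux n Z)
    | .vert Y Z => 1 + max (G.depthAux n Y) (G.depthAux n Z)

/-- The depth of the derivation tree below nonterminal `X`. -/
def depthNT (G : SLP2 A) (X : G.V) : ℕ := G.depthAux (G.rank X + 1) X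

/-- The depth of the SLP: the depth of its derivation tree. -/
def depth (G : SLP2 A) : ℕ := G.depthNT G.start

/-- The size of the SLP: the total number of symbols on the right-hand
sides of all productions. -/
def size (G : SLP2 A) : ℕ :=
  letI := G.fintypeV
  ∑ X : G.V, (match G.rhs X with
    | .chr _ => 1
    | .horiz _ _ => 2
    | .vert _ _ => 2)

/-- The number of nonterminals of the SLP. -/
def numNT (G : SLP2 A) : ℕ :=
  letI := G.fintypeV
  Fintype.card G.V

/-- Well-formedness: dimensions match in every production, i.e. in a
horizontal concatenation both arguments have equal heights, and in a
vertical concatenation both arguments have equal widths. -/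
def WF (G : SLP2 A) : Prop :=
  ∀ X : G.V,
    match G.rhs X with
    | .chr _ => True
    | .horiz Y Z => (G.expNT Y).h = (G.expNT Z).h
    | .vert Y Z => (G.expNT Y).w = (G.expNT Z).w

/-- A 1D SLP: a 2D SLP that uses only horizontal concatenations and derives
a string of height `1`. -/
def OneDim (G : SLP2 A) : Prop :=
  (∀ X Y Z, G.rhs X ≠ Rhs2.vert Y Z) ∧ (G.exp).h = 1

end SLP2
/-- The alphabet `{0, 1, $}`. -/
inductive Alpha3 : Type where
  | zero : Alpha3
  | one : Alpha3
  | dollar : Alpha3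
deriving DecidableEq

instance : Fintype Alpha3 :=
  ⟨{Alpha3.zero, Alpha3.one, Alpha3.dollar}, fun x => by cases x <;> simp⟩

/-- For `N = 2^n`, the 2D string `Bin_N` of size `N × (n+2)` whose `i`-th row
(1-indexed) is the `n`-bit binary representation (most significant bit first)
of `i - 1`, surrounded by one `$` symbol on each side. -/
def binStr (n : ℕ) : Str2 Alpha3 :=
  Str2.mk' (2 ^ n) (n + 2) fun i j =>
    some (if j = 0 ∨ j = n + 1 then Alpha3.dollar
      else if Nat.testBit i (n - j) then Alpha3.one else Alpha3.zero)

/-- For `N = 2^n`, the 2D string `ShiftBin_N` of size `2N × N(n+2)`: for every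
`i ∈ [0..N-1]`, the columns `i(n+2)+1` through `(i+1)(n+2)` (1-indexed) consist
of `i` rows filled with `0`'s, followed by a copy of `Bin_N`, followed by
`N - i` rows filled with `0`'s. -/
def shiftBinStr (n : ℕ) : Str2 Alpha3 :=
  Str2.mk' (2 * 2 ^ n) (2 ^ n * (n + 2)) fun r c =>
    let i := c / (n + 2)
    if i ≤ r ∧ r < i + 2 ^ n then (binStr n).f (r - i) (c % (n + 2)) else some Alpha3.zero

/-- A binary string `b`, surrounded by one `$` symbol on each side, as a string
over an alphabet with distinguished symbols `z` (zero), `o` (one), `d` (dollar). -/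
def dollarWrap {A : Type} (z o d : A) (b : List Bool) : List A :=
  d :: (b.map fun x => if x then o else z) ++ [d]

/-- The exponent of `M'`: the largest `m` such that `M' = 2^m` satisfies
`M' * (log₂ M' + 2) ≤ M / 2`, i.e. `2 * 2^m * (m + 2) ≤ M`. -/
def mExp (M : ℕ) : ℕ := Nat.findGreatest (fun m => 2 * 2 ^ m * (m + 2) ≤ M) M

/-- The 2D string `C_{N,M}` of size `N × M`: with `M'` the largest power of two
such that `M' * (log₂ M' + 2) ≤ M / 2` and `B = ShiftBin_{M'}` (of size
`2M' × M'(log₂ M' + 2)`), it consists of a left block of `⌊N/(2M')⌋` vertically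
concatenated copies of `B` padded below with `0`'s to height `N`; to its right,
a right block of `M'` rows of `0`'s followed by `⌊(N-M')/(2M')⌋` vertically
concatenated copies of `B`, padded below with `0`'s to height `N`; and columns
of `0`'s padding the total width to `M`. -/
def gadgetC (N M : ℕ) : Str2 Alpha3 :=
  let n := mExp M
  let M' := 2 ^ n
  let W := M' * (n + 2)
  Str2.mk' N M fun r c =>
    if c < W then
      (if r < 2 * M' * (N / (2 * M')) then (shiftBinStr n).f (r % (2 * M')) c
       else some Alpha3.zero)
    else if c < 2 * W then
      (if M' ≤ r ∧ r < M' + 2 * M' * ((N - M') / (2 * M'))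
       then (shiftBinStr n).f ((r - M') % (2 * M')) (c - W)
       else some Alpha3.zero)
    else some Alpha3.zero

set_option linter.unusedSectionVars false

namespace Gadget

variable {A : Type} [DecidableEq A]

/-- Expression trees for building SLPs; sharing is accounted for via the
set of distinct subterms. -/
inductive E (A : Type) : Type where
  | chr : A → E A
  | hc : E A → E A → E A
  | vc : E A → E A → E A
deriving DecidableEq

namespace E

/-- Denotation. -/
def den : E A → Str2 A
  | chr a => Str2.single a
  | hc x y => (den x).hcat (den y)
  | vc x y => (den x).vcat (den y)

/-- Number of nodes. -/
def nodes : E A → ℕ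
  | chr _ => 1
  | hc x y => nodes x + nodes y + 1
  | vc x y => nodes x + nodes y + 1

theorem nodes_pos (e : E A) : 0 < nodes e := by
  cases e <;> simp [nodes]

/-- The set of distinct subterms. -/
def sub : E A → Finset (E A)
  | chr a => {chr a}
  | hc x y => insert (hc x y) (sub x ∪ sub y)
  | vc x y => insert (vc x y) (sub x ∪ sub y)

theorem self_mem_sub (e : E A) : e ∈ sub e := by
  cases e <;> simp [sub]

theorem sub_sub : ∀ {e e' : E A}, e' ∈ sub e → sub e' ⊆ sub e := by
  intro e
  induction e with
  | chr a => intro e' he'; simp [sub] at he'; subst he'; exact fun _ h => h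
  | hc x y ihx ihy =>
      intro e' he'
      simp only [sub, Finset.mem_insert, Finset.mem_union] at he'
      rcases he' with h | h | h
      · subst h; exact fun _ h => h
      · exact (ihx h).trans (by intro z hz; simp [sub, Finset.mem_union, hz])
      · exact (ihy h).trans (by intro z hz; simp [sub, Finset.mem_union, hz])
  | vc x y ihx ihy =>
      intro e' he'
      simp only [sub, Finset.mem_insert, Finset.mem_union] at he'
      rcases he' with h | h | h
      · subst h; exact fun _ h => h
      · exact (ihx h).trans (by intro z hz; simp [sub, Finset.mem_union, hz])
      · exact (ihy h).trans (by intro z hz; simp [sub, Finset.mem_union, hz])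

theorem mem_sub_hc_left (x y : E A) : x ∈ sub (hc x y) := by
  simp [sub, Finset.mem_union, self_mem_sub]
theorem mem_sub_hc_right (x y : E A) : y ∈ sub (hc x y) := by
  simp [sub, Finset.mem_union, self_mem_sub]
theorem mem_sub_vc_left (x y : E A) : x ∈ sub (vc x y) := by
  simp [sub, Finset.mem_union, self_mem_sub]
theorem mem_sub_vc_right (x y : E A) : y ∈ sub (vc x y) := by
  simp [sub, Finset.mem_union, self_mem_sub]

/-- Well-formedness of an expression: in every (shared) subterm, horizontal
concatenations have matching heights and vertical ones matching widths. -/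
def Ok : E A → Prop
  | chr _ => True
  | hc x y => (den x).h = (den y).h ∧ Ok x ∧ Ok y
  | vc x y => (den x).w = (den y).w ∧ Ok x ∧ Ok y

/-- The property at a single node. -/
def nodeOk : E A → Prop
  | chr _ => True
  | hc x y => (den x).h = (den y).h
  | vc x y => (den x).w = (den y).w

theorem nodeOk_of_mem : ∀ {e e' : E A}, Ok e → e' ∈ sub e → nodeOk e' := by
  intro e
  induction e with
  | chr a => intro e' _ he'; simp [sub] at he'; subst he'; trivial
  | hc x y ihx ihy =>
      intro e' hok he'
      simp only [sub, Finset.mem_insert, Finset.mem_union] at he'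
      obtain ⟨h1, h2, h3⟩ := hok
      rcases he' with h | h | h
      · subst h; exact h1
      · exact ihx h2 h
      · exact ihy h3 h
  | vc x y ihx ihy =>
      intro e' hok he'
      simp only [sub, Finset.mem_insert, Finset.mem_union] at he'
      obtain ⟨h1, h2, h3⟩ := hok
      rcases he' with h | h | h
      · subst h; exact h1
      · exact ihx h2 h
      · exact ihy h3 h

end E

open E

/-- The SLP corresponding to an expression: one nonterminal per distinct
subterm. -/
def toSLP (e : E A) : SLP2 A where
  V := {x // x ∈ sub e}
  fintypeV := FinsetCoe.fintype _
  start := ⟨e, self_mem_sub e⟩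
  rhs := fun X =>
    match X with
    | ⟨E.chr a, _⟩ => Rhs2.chr a
    | ⟨E.hc x y, h⟩ => Rhs2.horiz ⟨x, sub_sub h (mem_sub_hc_left x y)⟩
                                  ⟨y, sub_sub h (mem_sub_hc_right x y)⟩
    | ⟨E.vc x y, h⟩ => Rhs2.vert ⟨x, sub_sub h (mem_sub_vc_left x y)⟩
                                 ⟨y, sub_sub h (mem_sub_vc_right x y)⟩
  rank := fun X => nodes X.1
  rank_horiz := by
    intro X Y Z hX
    obtain ⟨x, hx⟩ := X
    match x, hx with
    | E.chr a, _ => simp at hX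
    | E.hc x y, h =>
        simp only [Rhs2.horiz.injEq] at hX
        obtain ⟨hY, hZ⟩ := hX
        subst hY; subst hZ
        constructor <;> simp [nodes] <;> omega
    | E.vc x y, h => simp at hX
  rank_vert := by
    intro X Y Z hX
    obtain ⟨x, hx⟩ := X
    match x, hx with
    | E.chr a, _ => simp at hX
    | E.hc x y, h => simp at hX
    | E.vc x y, h =>
        simp only [Rhs2.vert.injEq] at hX
        obtain ⟨hY, hZ⟩ := hX
        subst hY; subst hZ
        constructor <;> simp [nodes] <;> omega

theorem toSLP_expAux (e : E A) :
    ∀ (n : ℕ) (x : E A) (hx : x ∈ sub e), nodes x ≤ n →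
      (toSLP e).expAux n ⟨x, hx⟩ = den x := by
  intro n
  induction n with
  | zero => intro x hx h; exact absurd h (by have := nodes_pos x; omega)
  | succ n ih =>
      intro x hx h
      match x with
      | E.chr a => rfl
      | E.hc x y =>
          show ((toSLP e).expAux n _).hcat ((toSLP e).expAux n _) = _
          rw [ih x _ (by simp [nodes] at h ⊢; omega),
              ih y _ (by simp [nodes] at h ⊢; omega)]
          rfl
      | E.vc x y =>
          show ((toSLP e).expAux n _).vcat ((toSLP e).expAux n _) = _
          rw [ih x _ (by simp [nodes] at h ⊢; omega),
              ih y _ (by simp [nodes] at h ⊢; omega)]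
          rfl

theorem toSLP_expNT (e : E A) (x : E A) (hx : x ∈ sub e) :
    (toSLP e).expNT ⟨x, hx⟩ = den x :=
  toSLP_expAux e _ x hx (by simp [toSLP])

theorem toSLP_exp (e : E A) : (toSLP e).exp = den e :=
  toSLP_expNT e e (self_mem_sub e)

theorem toSLP_wf (e : E A) (hok : Ok e) : (toSLP e).WF := by
  intro X
  obtain ⟨x, hx⟩ := X
  match x, hx with
  | E.chr a, _ => trivial
  | E.hc x y, h =>
      show ((toSLP e).expNT ⟨x, _⟩).h = ((toSLP e).expNT ⟨y, _⟩).h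
      rw [toSLP_expNT, toSLP_expNT]
      exact nodeOk_of_mem hok h
  | E.vc x y, h =>
      show ((toSLP e).expNT ⟨x, _⟩).w = ((toSLP e).expNT ⟨y, _⟩).w
      rw [toSLP_expNT, toSLP_expNT]
      exact nodeOk_of_mem hok h

theorem toSLP_size (e : E A) : (toSLP e).size ≤ 2 * (sub e).card := by
  unfold SLP2.size
  letI : Fintype (toSLP e).V := (toSLP e).fintypeV
  refine le_trans (Finset.sum_le_sum (g := fun _ => 2) (fun i _ => ?_)) ?_
  · exact (match (toSLP e).rhs i with
      | .chr _ => by norm_num | .horiz _ _ => le_refl 2 | .vert _ _ => le_refl 2)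
  · rw [Finset.sum_const, smul_eq_mul]
    have h1 : Fintype.card (toSLP e).V = (sub e).card := Fintype.card_coe _
    rw [Finset.card_univ, h1, mul_comm]

theorem exists_slp (e : E A) (hok : Ok e) :
    ∃ G : SLP2 A, G.WF ∧ G.exp = den e ∧ G.size ≤ 2 * (sub e).card :=
  ⟨toSLP e, toSLP_wf e hok, toSLP_exp e, toSLP_size e⟩

end Gadget

namespace Gadget

variable {A : Type}

theorem Str2.ext' {S T : Str2 A} (hh : S.h = T.h) (hw : S.w = T.w)
    (hf : ∀ i j, S.f i j = T.f i j) : S = T := by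
  cases S; cases T
  simp only [Str2.mk.injEq]
  exact ⟨hh, hw, funext fun i => funext fun j => hf i j⟩

/-- Canonicity: `none` outside the rectangle. -/
def Good (S : Str2 A) : Prop := ∀ i j, ¬(i < S.h ∧ j < S.w) → S.f i j = none

theorem good_mk' (h w : ℕ) (g : ℕ → ℕ → Option A) : Good (Str2.mk' h w g) := by
  intro i j hij
  simp only [Str2.mk'] at hij ⊢
  rw [if_neg hij]

/-- Constant rectangle. -/
def crect (a : A) (h w : ℕ) : Str2 A := Str2.mk' h w fun _ _ => some a

@[simp] theorem crect_h (a : A) (h w : ℕ) : (crect a h w).h = h := rfl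
@[simp] theorem crect_w (a : A) (h w : ℕ) : (crect a h w).w = w := rfl

theorem single_eq_crect (a : A) : Str2.single a = crect a 1 1 := rfl

/-- Vertical repetition. -/
def vrep (S : Str2 A) (k : ℕ) : Str2 A :=
  Str2.mk' (k * S.h) S.w fun i j => S.f (i % S.h) j

/-- Horizontal repetition. -/
def hrep (S : Str2 A) (k : ℕ) : Str2 A :=
  Str2.mk' S.h (k * S.w) fun i j => S.f i (j % S.w)

@[simp] theorem vrep_h (S : Str2 A) (k : ℕ) : (vrep S k).h = k * S.h := rfl
@[simp] theorem vrep_w (S : Str2 A) (k : ℕ) : (vrep S k).w = S.w := rfl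
@[simp] theorem hrep_h (S : Str2 A) (k : ℕ) : (hrep S k).h = S.h := rfl
@[simp] theorem hrep_w (S : Str2 A) (k : ℕ) : (hrep S k).w = k * S.w := rfl
@[simp] theorem vcat_h (S T : Str2 A) : (S.vcat T).h = S.h + T.h := rfl
@[simp] theorem vcat_w (S T : Str2 A) : (S.vcat T).w = S.w := rfl
@[simp] theorem hcat_h (S T : Str2 A) : (S.hcat T).h = S.h := rfl
@[simp] theorem hcat_w (S T : Str2 A) : (S.hcat T).w = S.w + T.w := rfl

theorem vrep_one {S : Str2 A} (hS : Good S) : vrep S 1 = S := by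
  refine Str2.ext' (by simp) rfl fun i j => ?_
  simp only [vrep, Str2.mk', one_mul]
  split_ifs with h
  · rw [Nat.mod_eq_of_lt h.1]
  · exact (hS i j h).symm

theorem hrep_one {S : Str2 A} (hS : Good S) : hrep S 1 = S := by
  refine Str2.ext' rfl (by simp) fun i j => ?_
  simp only [hrep, Str2.mk', one_mul]
  split_ifs with h
  · rw [Nat.mod_eq_of_lt h.2]
  · exact (hS i j h).symm

theorem vrep_add (S : Str2 A) (a b : ℕ) :
    vrep S (a + b) = (vrep S a).vcat (vrep S b) := by
  refine Str2.ext' (by simp [add_mul]) rfl fun i j => ?_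
  simp only [vrep, Str2.vcat, Str2.mk', vrep_h, vrep_w, add_mul]
  by_cases hj : j < S.w
  · by_cases h1 : i < a * S.h
    · have h2 : i < a * S.h + b * S.h := by omega
      simp [h1, h2, hj]
    · by_cases h2 : i < a * S.h + b * S.h
      · have h3 : i - a * S.h < b * S.h := by omega
        simp only [if_pos (And.intro h2 hj), if_neg h1, if_pos (And.intro h3 hj)]
        congr 1
        conv_lhs => rw [show i = (i - a * S.h) + a * S.h by omega]
        rw [Nat.add_mul_mod_self_right]
      · simp [h2]
  · simp [hj]

theorem hrep_add (S : Str2 A) (a b : ℕ) :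
    hrep S (a + b) = (hrep S a).hcat (hrep S b) := by
  refine Str2.ext' rfl (by simp [add_mul]) fun i j => ?_
  simp only [hrep, Str2.hcat, Str2.mk', hrep_h, hrep_w, add_mul]
  by_cases hi : i < S.h
  · by_cases h1 : j < a * S.w
    · have h2 : j < a * S.w + b * S.w := by omega
      simp [h1, h2, hi]
    · by_cases h2 : j < a * S.w + b * S.w
      · have h3 : j - a * S.w < b * S.w := by omega
        simp only [if_pos (And.intro hi h2), if_neg h1, if_pos (And.intro hi h3)]
        congr 1
        conv_lhs => rw [show j = (j - a * S.w) + a * S.w by omega]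
        rw [Nat.add_mul_mod_self_right]
      · simp [h2]
  · simp [hi]

theorem vrep_crect (a : A) (h w k : ℕ) : vrep (crect a h w) k = crect a (k * h) w := by
  refine Str2.ext' (by simp) rfl fun i j => ?_
  simp only [vrep, crect, Str2.mk', crect_h, crect_w]
  split_ifs with h1 h2
  · rfl
  · rcases h1 with ⟨hi, hj⟩
    rcases Nat.eq_zero_or_pos h with h0 | h0
    · subst h0; simp at hi
    · exact absurd ⟨Nat.mod_lt _ h0, hj⟩ h2
  · rfl

theorem hrep_crect (a : A) (h w k : ℕ) : hrep (crect a h w) k = crect a h (k * w) := by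
  refine Str2.ext' rfl (by simp) fun i j => ?_
  simp only [hrep, crect, Str2.mk', crect_h, crect_w]
  split_ifs with h1 h2
  · rfl
  · rcases h1 with ⟨hi, hj⟩
    rcases Nat.eq_zero_or_pos w with h0 | h0
    · subst h0; simp at hj
    · exact absurd ⟨hi, Nat.mod_lt _ h0⟩ h2
  · rfl

theorem vcat_crect (a : A) (h1 h2 w : ℕ) :
    (crect a h1 w).vcat (crect a h2 w) = crect a (h1 + h2) w := by
  refine Str2.ext' (by simp) rfl fun i j => ?_
  simp only [Str2.vcat, crect, Str2.mk', crect_h, crect_w]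
  split_ifs <;> first | rfl | omega

theorem hcat_crect (a : A) (h w1 w2 : ℕ) :
    (crect a h w1).hcat (crect a h w2) = crect a h (w1 + w2) := by
  refine Str2.ext' rfl (by simp) fun i j => ?_
  simp only [Str2.hcat, crect, Str2.mk', crect_h, crect_w]
  split_ifs <;> first | rfl | omega

theorem good_den [DecidableEq A] (e : E A) : Good (E.den e) := by
  cases e with
  | chr a => exact good_mk' _ _ _
  | hc x y => exact good_mk' _ _ _
  | vc x y => exact good_mk' _ _ _

end Gadget

namespace Gadget
namespace E

variable {A : Type} [DecidableEq A]

@[simp] theorem den_chr (a : A) : den (chr a) = Str2.single a := rfl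
@[simp] theorem den_hc (x y : E A) : den (hc x y) = (den x).hcat (den y) := rfl
@[simp] theorem den_vc (x y : E A) : den (vc x y) = (den x).vcat (den y) := rfl

theorem log_half (k : ℕ) (h : 2 ≤ k) : Nat.log 2 (k / 2) + 1 = Nat.log 2 k := by
  rw [Nat.log_div_base]
  have : 1 ≤ Nat.log 2 k := Nat.succ_le_of_lt (Nat.log_pos (by norm_num) h)
  omega

theorem sub_subset_vc_left (x y : E A) : sub x ⊆ sub (vc x y) :=
  sub_sub (mem_sub_vc_left x y)
theorem sub_subset_vc_right (x y : E A) : sub y ⊆ sub (vc x y) :=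
  sub_sub (mem_sub_vc_right x y)
theorem sub_subset_hc_left (x y : E A) : sub x ⊆ sub (hc x y) :=
  sub_sub (mem_sub_hc_left x y)
theorem sub_subset_hc_right (x y : E A) : sub y ⊆ sub (hc x y) :=
  sub_sub (mem_sub_hc_right x y)

theorem card_sub_vc (x y : E A) :
    (sub (vc x y)).card ≤ (sub x).card + (sub y).card + 1 :=
  le_trans (Finset.card_insert_le _ _) (by
    have := Finset.card_union_le (sub x) (sub y); omega)

theorem card_sub_hc (x y : E A) :
    (sub (hc x y)).card ≤ (sub x).card + (sub y).card + 1 :=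
  le_trans (Finset.card_insert_le _ _) (by
    have := Finset.card_union_le (sub x) (sub y); omega)

theorem card_sub_vc_right_le (x y : E A) (h : sub x ⊆ sub y) :
    (sub (vc x y)).card ≤ (sub y).card + 1 := by
  show (insert (vc x y) (sub x ∪ sub y)).card ≤ _
  rw [Finset.union_eq_right.mpr h]
  exact Finset.card_insert_le _ _

theorem card_sub_hc_right_le (x y : E A) (h : sub x ⊆ sub y) :
    (sub (hc x y)).card ≤ (sub y).card + 1 := by
  show (insert (hc x y) (sub x ∪ sub y)).card ≤ _
  rw [Finset.union_eq_right.mpr h]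
  exact Finset.card_insert_le _ _

theorem exists_vpow (x : E A) (hx : Ok x) :
    ∀ k : ℕ, 1 ≤ k →
    ∃ y : E A, den y = vrep (den x) k ∧ Ok y ∧ sub x ⊆ sub y ∧
      (sub y).card ≤ (sub x).card + 2 * Nat.log 2 k := by
  intro k
  induction k using Nat.strong_induction_on with
  | _ k ih =>
    intro hk
    rcases Nat.lt_or_ge k 2 with h2 | h2
    · have hk1 : k = 1 := by omega
      subst hk1
      exact ⟨x, (vrep_one (good_den x)).symm, hx, subset_refl _, by simp⟩
    · obtain ⟨y', hd, hok, hsub, hcard⟩ := ih (k / 2) (by omega) (by omega)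
      have hlog := log_half k h2
      by_cases he : k % 2 = 0
      · refine ⟨vc y' y', ?_, ⟨rfl, hok, hok⟩,
          hsub.trans (sub_subset_vc_left _ _), ?_⟩
        · rw [den_vc, hd, ← vrep_add]
          congr 1
          omega
        · have := card_sub_vc_right_le y' y' (subset_refl _)
          omega
      · refine ⟨vc x (vc y' y'), ?_, ?_, sub_subset_vc_left _ _, ?_⟩
        · have : vrep (den x) k = (den x).vcat ((den y').vcat (den y')) := by
            rw [show k = 1 + (k / 2 + k / 2) by omega, vrep_add, vrep_add,
              vrep_one (good_den x), hd]
          rw [den_vc, den_vc, this]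
        · refine ⟨?_, hx, rfl, hok, hok⟩
          rw [den_vc, vcat_w, hd, vrep_w]
        · have h1 := card_sub_vc_right_le y' y' (subset_refl _)
          have h2' := card_sub_vc_right_le x (vc y' y')
            (hsub.trans (sub_subset_vc_left _ _))
          omega

theorem exists_hpow (x : E A) (hx : Ok x) :
    ∀ k : ℕ, 1 ≤ k →
    ∃ y : E A, den y = hrep (den x) k ∧ Ok y ∧ sub x ⊆ sub y ∧
      (sub y).card ≤ (sub x).card + 2 * Nat.log 2 k := by
  intro k
  induction k using Nat.strong_induction_on with
  | _ k ih =>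
    intro hk
    rcases Nat.lt_or_ge k 2 with h2 | h2
    · have hk1 : k = 1 := by omega
      subst hk1
      exact ⟨x, (hrep_one (good_den x)).symm, hx, subset_refl _, by simp⟩
    · obtain ⟨y', hd, hok, hsub, hcard⟩ := ih (k / 2) (by omega) (by omega)
      have hlog := log_half k h2
      by_cases he : k % 2 = 0
      · refine ⟨hc y' y', ?_, ⟨rfl, hok, hok⟩,
          hsub.trans (sub_subset_hc_left _ _), ?_⟩
        · rw [den_hc, hd, ← hrep_add]
          congr 1
          omega
        · have := card_sub_hc_right_le y' y' (subset_refl _)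
          omega
      · refine ⟨hc x (hc y' y'), ?_, ?_, sub_subset_hc_left _ _, ?_⟩
        · have : hrep (den x) k = (den x).hcat ((den y').hcat (den y')) := by
            rw [show k = 1 + (k / 2 + k / 2) by omega, hrep_add, hrep_add,
              hrep_one (good_den x), hd]
          rw [den_hc, den_hc, this]
        · refine ⟨?_, hx, rfl, hok, hok⟩
          rw [den_hc, hcat_h, hd, hrep_h]
        · have h1 := card_sub_hc_right_le y' y' (subset_refl _)
          have h2' := card_sub_hc_right_le x (hc y' y')
            (hsub.trans (sub_subset_hc_left _ _))
          omega

/-- A constant rectangle has a small expression. -/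
theorem exists_crect (a : A) (h w : ℕ) (hh : 1 ≤ h) (hw : 1 ≤ w) :
    ∃ y : E A, den y = crect a h w ∧ Ok y ∧
      (sub y).card ≤ 2 * Nat.log 2 h + 2 * Nat.log 2 w + 1 := by
  obtain ⟨c, hcd, hcok, _, hccard⟩ := exists_vpow (chr a) trivial h hh
  have hcval : den c = crect a h 1 := by
    rw [hcd, den_chr, single_eq_crect, vrep_crect, mul_one]
  obtain ⟨y, hyd, hyok, _, hycard⟩ := exists_hpow c hcok w hw
  refine ⟨y, ?_, hyok, ?_⟩
  · rw [hyd, hcval, hrep_crect, mul_one]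
  · have : (sub (chr a : E A)).card = 1 := rfl
    omega

end E
end Gadget

namespace Gadget
open E

@[simp] theorem mk'_h {A : Type} (h w : ℕ) (g : ℕ → ℕ → Option A) :
    (Str2.mk' h w g).h = h := rfl
@[simp] theorem mk'_w {A : Type} (h w : ℕ) (g : ℕ → ℕ → Option A) :
    (Str2.mk' h w g).w = w := rfl

/-- The `2^k × k` table of `k`-bit binary representations, MSB first. -/
def Tstr (k : ℕ) : Str2 Alpha3 :=
  Str2.mk' (2 ^ k) k fun i j =>
    some (if Nat.testBit i (k - 1 - j) then Alpha3.one else Alpha3.zero)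

theorem Tstr_one :
    Tstr 1 = (crect Alpha3.zero 1 1).vcat (crect Alpha3.one 1 1) := by
  refine Str2.ext' rfl rfl fun i j => ?_
  simp only [Tstr, Str2.vcat, crect, Str2.mk', crect_h, crect_w]
  by_cases hj : j < 1
  · by_cases hi : i < 2
    · interval_cases i <;> interval_cases j <;> simp [Nat.testBit]
    · rw [if_neg (by omega), if_neg (by omega)]
  · rw [if_neg (by tauto), if_neg (by tauto)]

theorem Tstr_succ (k : ℕ) :
    Tstr (k + 1) =
      ((crect Alpha3.zero (2 ^ k) 1).hcat (Tstr k)).vcat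
        ((crect Alpha3.one (2 ^ k) 1).hcat (Tstr k)) := by
  have hpow : 2 ^ (k + 1) = 2 ^ k + 2 ^ k := by rw [pow_succ]; ring
  refine Str2.ext' (by simp [Tstr, hpow]) (by simp [Tstr]; omega) fun i j => ?_
  simp only [Tstr, Str2.vcat, Str2.hcat, crect, Str2.mk', crect_h, crect_w,
    hcat_h, hcat_w, mk'_h, mk'_w]
  by_cases hj : j < k + 1
  swap
  · rw [if_neg (by omega), if_neg (by omega)]
  by_cases hi : i < 2 ^ (k + 1)
  swap
  · rw [if_neg (by omega), if_neg (by omega)]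
  rw [if_pos (⟨hi, hj⟩ : i < 2 ^ (k+1) ∧ j < k + 1),
    if_pos (⟨by omega, by omega⟩ : i < 2 ^ k + 2 ^ k ∧ j < 1 + k)]
  by_cases hik : i < 2 ^ k
  · rw [if_pos hik, if_pos (⟨hik, by omega⟩ : i < 2 ^ k ∧ j < 1 + k)]
    by_cases hj0 : j < 1
    · have hj' : j = 0 := by omega
      subst hj'
      rw [if_pos hj0, if_pos (⟨hik, hj0⟩ : i < 2 ^ k ∧ 0 < 1)]
      have hb : Nat.testBit i (k + 1 - 1 - 0) = false := by
        have : k + 1 - 1 - 0 = k := by omega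
        rw [this]
        exact Nat.testBit_lt_two_pow (by simpa using hik)
      rw [hb]
      rfl
    · rw [if_neg hj0, if_pos (⟨hik, by omega⟩ : i < 2 ^ k ∧ j - 1 < k)]
      have hidx : k + 1 - 1 - j = k - 1 - (j - 1) := by omega
      rw [hidx]
  · rw [if_neg hik, if_pos (⟨by omega, by omega⟩ : i - 2 ^ k < 2 ^ k ∧ j < 1 + k)]
    by_cases hj0 : j < 1
    · have hj' : j = 0 := by omega
      subst hj'
      rw [if_pos hj0, if_pos (⟨by omega, hj0⟩ : i - 2 ^ k < 2 ^ k ∧ 0 < 1)]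
      have hb : Nat.testBit i (k + 1 - 1 - 0) = true := by
        have h0 : k + 1 - 1 - 0 = k := by omega
        rw [h0, show i = 2 ^ k + (i - 2 ^ k) by omega, Nat.testBit_two_pow_add_eq,
          Nat.testBit_lt_two_pow (show i - 2 ^ k < 2 ^ k by omega)]
        rfl
      rw [hb]
      rfl
    · rw [if_neg hj0, if_pos (⟨by omega, by omega⟩ : i - 2 ^ k < 2 ^ k ∧ j - 1 < k)]
      have hidx : k + 1 - 1 - j = k - 1 - (j - 1) := by omega
      have hidx2 : k - 1 - (j - 1) < k := by omega
      have hb : Nat.testBit i (k + 1 - 1 - j) = Nat.testBit (i - 2 ^ k) (k - 1 - (j - 1)) := by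
        rw [hidx]
        conv_lhs => rw [show i = 2 ^ k + (i - 2 ^ k) by omega]
        rw [Nat.testBit_two_pow_add_gt hidx2]
      rw [hb]

theorem card_insert5 {α : Type} [DecidableEq α] (a b c d e : α) (U : Finset α) :
    (insert a (insert b (insert c (insert d (insert e U))))).card ≤ U.card + 5 := by
  refine le_trans (Finset.card_insert_le _ _) (Nat.succ_le_succ ?_)
  refine le_trans (Finset.card_insert_le _ _) (Nat.succ_le_succ ?_)
  refine le_trans (Finset.card_insert_le _ _) (Nat.succ_le_succ ?_)
  refine le_trans (Finset.card_insert_le _ _) (Nat.succ_le_succ ?_)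
  exact le_trans (Finset.card_insert_le _ _) (Nat.succ_le_succ le_rfl)

theorem exists_T : ∀ k : ℕ, 1 ≤ k →
    ∃ z o t : E Alpha3,
      den z = crect Alpha3.zero (2 ^ k) 1 ∧ den o = crect Alpha3.one (2 ^ k) 1 ∧
      den t = Tstr k ∧ Ok z ∧ Ok o ∧ Ok t ∧
      (sub z ∪ sub o ∪ sub t).card ≤ 8 * k := by
  intro k
  induction k with
  | zero => omega
  | succ k ih =>
    intro _
    rcases Nat.eq_zero_or_pos k with hk | hk
    · subst hk
      refine ⟨vc (chr Alpha3.zero) (chr Alpha3.zero),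
        vc (chr Alpha3.one) (chr Alpha3.one),
        vc (chr Alpha3.zero) (chr Alpha3.one), ?_, ?_, ?_, ⟨rfl, trivial, trivial⟩,
        ⟨rfl, trivial, trivial⟩, ⟨rfl, trivial, trivial⟩, ?_⟩
      · rw [den_vc, den_chr, single_eq_crect, vcat_crect]; norm_num
      · rw [den_vc, den_chr, single_eq_crect, vcat_crect]; norm_num
      · rw [den_vc, den_chr, den_chr, single_eq_crect, single_eq_crect, Tstr_one]
      · have hsub : sub (vc (chr Alpha3.zero) (chr Alpha3.zero) : E Alpha3) ∪
            sub (vc (chr Alpha3.one) (chr Alpha3.one)) ∪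
            sub (vc (chr Alpha3.zero) (chr Alpha3.one)) ⊆
            insert (vc (chr Alpha3.zero) (chr Alpha3.zero))
              (insert (vc (chr Alpha3.one) (chr Alpha3.one))
                (insert (vc (chr Alpha3.zero) (chr Alpha3.one))
                  (insert (chr Alpha3.zero) (insert (chr Alpha3.one) ∅)))) := by
          intro e he
          simp only [sub, Finset.mem_union, Finset.mem_insert,
            Finset.mem_singleton] at he ⊢
          tauto
        calc _ ≤ _ := Finset.card_le_card hsub
          _ ≤ (∅ : Finset (E Alpha3)).card + 5 := card_insert5 _ _ _ _ _ _
          _ ≤ 8 * (0 + 1) := by simp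
    · obtain ⟨z, o, t, hz, ho, ht, hzok, hook, htok, hcard⟩ := ih hk
      refine ⟨vc z z, vc o o, vc (hc z t) (hc o t), ?_, ?_, ?_, ⟨rfl, hzok, hzok⟩,
        ⟨rfl, hook, hook⟩, ?_, ?_⟩
      · rw [den_vc, hz, vcat_crect]
        congr 1
        rw [pow_succ]; ring
      · rw [den_vc, ho, vcat_crect]
        congr 1
        rw [pow_succ]; ring
      · rw [den_vc, den_hc, den_hc, hz, ho, ht, Tstr_succ]
      · refine ⟨?_, ⟨?_, hzok, htok⟩, ⟨?_, hook, htok⟩⟩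
        · rw [den_hc, den_hc, hcat_w, hcat_w, hz, ho]
          simp
        · rw [hz, ht]; rfl
        · rw [ho, ht]; rfl
      · have hsub : sub (vc z z) ∪ sub (vc o o) ∪ sub (vc (hc z t) (hc o t)) ⊆
            insert (vc z z) (insert (vc o o) (insert (vc (hc z t) (hc o t))
              (insert (hc z t) (insert (hc o t) (sub z ∪ sub o ∪ sub t))))) := by
          intro e he
          simp only [sub, Finset.mem_union, Finset.mem_insert] at he ⊢
          tauto
        calc _ ≤ _ := Finset.card_le_card hsub
          _ ≤ (sub z ∪ sub o ∪ sub t).card + 5 := card_insert5 _ _ _ _ _ _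
          _ ≤ 8 * (k + 1) := by omega

end Gadget

namespace Gadget
open E

theorem binStr_zero : binStr 0 = crect Alpha3.dollar 1 2 := by
  refine Str2.ext' rfl rfl fun i j => ?_
  simp only [binStr, crect, Str2.mk', pow_zero]
  by_cases h : i < 1 ∧ j < 2
  · rw [if_pos (show i < 1 ∧ j < 0 + 2 by omega), if_pos h,
      if_pos (show j = 0 ∨ j = 0 + 1 by omega)]
  · rw [if_neg (show ¬(i < 1 ∧ j < 0 + 2) by omega), if_neg h]

theorem binStr_decomp (n : ℕ) :
    binStr n = (crect Alpha3.dollar (2 ^ n) 1).hcat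
      ((Tstr n).hcat (crect Alpha3.dollar (2 ^ n) 1)) := by
  refine Str2.ext' (by simp [binStr]) (by simp [binStr, Tstr]; omega) fun i j => ?_
  simp only [binStr, Tstr, Str2.hcat, crect, Str2.mk', crect_h, crect_w,
    hcat_h, hcat_w, mk'_h, mk'_w]
  by_cases hi : i < 2 ^ n
  swap
  · rw [if_neg (by omega), if_neg (by omega)]
  by_cases hj : j < n + 2
  swap
  · rw [if_neg (by omega), if_neg (by omega)]
  rw [if_pos (⟨hi, hj⟩ : i < 2 ^ n ∧ j < n + 2),
    if_pos (⟨hi, by omega⟩ : i < 2 ^ n ∧ j < 1 + (n + 1))]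
  by_cases hj0 : j < 1
  · rw [if_pos hj0, if_pos (⟨hi, hj0⟩ : i < 2 ^ n ∧ j < 1),
      if_pos (by omega : j = 0 ∨ j = n + 1)]
  · rw [if_neg hj0, if_pos (⟨hi, by omega⟩ : i < 2 ^ n ∧ j - 1 < n + 1)]
    by_cases hjn : j - 1 < n
    · rw [if_pos hjn, if_pos (⟨hi, hjn⟩ : i < 2 ^ n ∧ j - 1 < n),
        if_neg (by omega : ¬(j = 0 ∨ j = n + 1))]
      have : n - j = n - 1 - (j - 1) := by omega
      rw [this]
    · rw [if_neg hjn, if_pos (⟨hi, by omega⟩ : i < 2 ^ n ∧ j - 1 - n < 1),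
        if_pos (by omega : j = 0 ∨ j = n + 1)]

theorem exists_bin (n : ℕ) :
    ∃ b : E Alpha3, den b = binStr n ∧ Ok b ∧ (sub b).card ≤ 13 * n + 4 := by
  rcases Nat.eq_zero_or_pos n with hn | hn
  · subst hn
    refine ⟨hc (chr Alpha3.dollar) (chr Alpha3.dollar), ?_, ⟨rfl, trivial, trivial⟩, ?_⟩
    · rw [den_hc, den_chr, single_eq_crect, hcat_crect, binStr_zero]
    · exact le_trans (card_sub_hc _ _) (by simp [sub])
  · obtain ⟨z, o, t, hz, ho, ht, hzok, hook, htok, hcard⟩ := exists_T n hn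
    obtain ⟨dc, hdc, hdcok, hdccard⟩ :=
      exists_crect Alpha3.dollar (2 ^ n) 1 (Nat.one_le_two_pow) le_rfl
    refine ⟨hc dc (hc t dc), ?_, ?_, ?_⟩
    · rw [den_hc, den_hc, hdc, ht, binStr_decomp]
    · refine ⟨?_, hdcok, ?_, htok, hdcok⟩
      · rw [den_hc, hcat_h, hdc, ht]; rfl
      · rw [hdc, ht]; rfl
    · have h1 := card_sub_hc t dc
      have h2 := card_sub_hc dc (hc t dc)
      have h3 : (sub t).card ≤ 8 * n :=
        le_trans (Finset.card_le_card (by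
          intro e he
          simp only [Finset.mem_union]
          tauto)) hcard
      have h4 : Nat.log 2 (2 ^ n) = n := Nat.log_pow (by norm_num) n
      have h5 : Nat.log 2 1 = 0 := by simp
      omega

end Gadget

namespace Gadget
open E

@[simp] theorem binStr_h (n : ℕ) : (binStr n).h = 2 ^ n := rfl
@[simp] theorem binStr_w (n : ℕ) : (binStr n).w = n + 2 := rfl

/-- Partial shifted-Bin array: the `(2^n + 2^k) × 2^k(n+2)` array whose `i`-th
column block carries `Bin` shifted down by `i`. -/
def Dstr (n k : ℕ) : Str2 Alpha3 :=
  Str2.mk' (2 ^ n + 2 ^ k) (2 ^ k * (n + 2)) fun r c =>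
    if c / (n + 2) ≤ r ∧ r < c / (n + 2) + 2 ^ n then
      (binStr n).f (r - c / (n + 2)) (c % (n + 2))
    else some Alpha3.zero

theorem shiftBin_eq_Dstr (n : ℕ) : shiftBinStr n = Dstr n n := by
  refine Str2.ext' (by simp [shiftBinStr, Dstr, two_mul]) rfl fun r c => ?_
  simp only [shiftBinStr, Dstr, Str2.mk', two_mul]

theorem Dstr_zero (n : ℕ) :
    Dstr n 0 = (binStr n).vcat (crect Alpha3.zero 1 (n + 2)) := by
  refine Str2.ext' (by simp [Dstr]) (by simp [Dstr]) fun r c => ?_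
  simp only [Dstr, Str2.vcat, crect, Str2.mk', binStr_h, binStr_w, mk'_h, mk'_w,
    pow_zero, one_mul]
  by_cases hin : r < 2 ^ n + 1 ∧ c < n + 2
  swap
  · rw [if_neg hin, if_neg (by omega)]
  obtain ⟨hr, hc⟩ := hin
  have hc0 : c / (n + 2) = 0 := Nat.div_eq_of_lt (by omega)
  have hcm : c % (n + 2) = c := Nat.mod_eq_of_lt (by omega)
  rw [if_pos ⟨hr, hc⟩, if_pos (⟨hr, hc⟩ : r < 2 ^ n + 1 ∧ c < n + 2), hc0, hcm]
  by_cases hr2 : r < 2 ^ n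
  · rw [if_pos hr2, if_pos (⟨Nat.zero_le r, by omega⟩ : 0 ≤ r ∧ r < 0 + 2 ^ n), Nat.sub_zero]
  · rw [if_neg hr2, if_neg (by omega : ¬(0 ≤ r ∧ r < 0 + 2 ^ n)),
      if_pos (⟨by omega, hc⟩ : r - 2 ^ n < 1 ∧ c < n + 2)]

theorem Dstr_succ (n k : ℕ) :
    Dstr n (k + 1) =
      ((Dstr n k).vcat (crect Alpha3.zero (2 ^ k) (2 ^ k * (n + 2)))).hcat
        ((crect Alpha3.zero (2 ^ k) (2 ^ k * (n + 2))).vcat (Dstr n k)) := by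
  have hp : (2 : ℕ) ^ (k + 1) = 2 ^ k + 2 ^ k := by rw [pow_succ]; ring
  have hW : (2 : ℕ) ^ (k + 1) * (n + 2) = 2 ^ k * (n + 2) + 2 ^ k * (n + 2) := by
    rw [hp]; ring
  refine Str2.ext' (by simp [Dstr]; omega) (by simp [Dstr]; omega) fun r c => ?_
  simp only [Dstr, Str2.vcat, Str2.hcat, crect, Str2.mk', mk'_h, mk'_w,
    crect_h, crect_w, vcat_h, vcat_w, hcat_h, hcat_w]
  set W0 := 2 ^ k * (n + 2) with hW0
  by_cases hin : r < 2 ^ n + 2 ^ (k + 1) ∧ c < 2 ^ (k + 1) * (n + 2)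
  swap
  · rw [if_neg hin, if_neg (by omega)]
  obtain ⟨hr, hc⟩ := hin
  rw [if_pos ⟨hr, hc⟩,
    if_pos (⟨by omega, by omega⟩ : r < 2 ^ n + 2 ^ k + 2 ^ k ∧ c < W0 + W0)]
  by_cases hcW : c < W0
  · rw [if_pos hcW,
      if_pos (⟨by omega, hcW⟩ : r < 2 ^ n + 2 ^ k + 2 ^ k ∧ c < W0)]
    by_cases hr2 : r < 2 ^ n + 2 ^ k
    · rw [if_pos hr2, if_pos (⟨hr2, hcW⟩ : r < 2 ^ n + 2 ^ k ∧ c < W0)]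
    · have hi : c / (n + 2) < 2 ^ k := (Nat.div_lt_iff_lt_mul (by omega)).mpr
        (by omega)
      have hneg : ¬(c / (n + 2) ≤ r ∧ r < c / (n + 2) + 2 ^ n) := by
        generalize c / (n + 2) = f at hi ⊢
        omega
      rw [if_neg hr2,
        if_pos (⟨by omega, hcW⟩ : r - (2 ^ n + 2 ^ k) < 2 ^ k ∧ c < W0),
        if_neg hneg]
  · rw [if_neg hcW,
      if_pos (⟨by omega, by omega⟩ : r < 2 ^ k + (2 ^ n + 2 ^ k) ∧ c - W0 < W0)]
    have hcomm : (n + 2) * 2 ^ k = W0 := by rw [hW0]; ring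
    have hd : c / (n + 2) = 2 ^ k + (c - W0) / (n + 2) := by
      conv_lhs => rw [show c = (n + 2) * 2 ^ k + (c - W0) by omega]
      rw [Nat.mul_add_div (by omega)]
    have hm : c % (n + 2) = (c - W0) % (n + 2) := by
      conv_lhs => rw [show c = (n + 2) * 2 ^ k + (c - W0) by omega]
      rw [Nat.mul_add_mod]
    by_cases hr2 : r < 2 ^ k
    · have hneg : ¬(c / (n + 2) ≤ r ∧ r < c / (n + 2) + 2 ^ n) := by
        generalize (c - W0) / (n + 2) = g at hd
        generalize c / (n + 2) = f at hd ⊢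
        omega
      rw [if_pos hr2, if_pos (⟨hr2, by omega⟩ : r < 2 ^ k ∧ c - W0 < W0),
        if_neg hneg]
    · rw [if_neg hr2,
        if_pos (⟨by omega, by omega⟩ : r - 2 ^ k < 2 ^ n + 2 ^ k ∧ c - W0 < W0),
        hd, hm]
      by_cases hcond : (c - W0) / (n + 2) ≤ r - 2 ^ k ∧
          r - 2 ^ k < (c - W0) / (n + 2) + 2 ^ n
      · have hpos : 2 ^ k + (c - W0) / (n + 2) ≤ r ∧
            r < 2 ^ k + (c - W0) / (n + 2) + 2 ^ n := by
          generalize (c - W0) / (n + 2) = g at hcond ⊢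
          omega
        rw [if_pos hpos, if_pos hcond]
        congr 1
        rw [Nat.sub_sub]
      · have hneg : ¬(2 ^ k + (c - W0) / (n + 2) ≤ r ∧
            r < 2 ^ k + (c - W0) / (n + 2) + 2 ^ n) := by
          generalize (c - W0) / (n + 2) = g at hcond ⊢
          omega
        rw [if_neg hneg, if_neg hcond]

theorem exists_D (n : ℕ) : ∀ k : ℕ,
    ∃ d zr : E Alpha3, den d = Dstr n k ∧
      den zr = crect Alpha3.zero (2 ^ k) (2 ^ k * (n + 2)) ∧
      Ok d ∧ Ok zr ∧ (sub d ∪ sub zr).card ≤ 16 * n + 11 + 5 * k := by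
  intro k
  induction k with
  | zero =>
    obtain ⟨b, hb, hbok, hbcard⟩ := exists_bin n
    obtain ⟨z0, hz0, hz0ok, hz0card⟩ :=
      exists_crect Alpha3.zero 1 (n + 2) le_rfl (by omega)
    refine ⟨vc b z0, z0, ?_, ?_, ⟨?_, hbok, hz0ok⟩, hz0ok, ?_⟩
    · rw [den_vc, hb, hz0, ← Dstr_zero]
    · rw [hz0]; norm_num
    · rw [hb, hz0]; rfl
    · have h1 : sub (vc b z0) ∪ sub z0 ⊆ insert (vc b z0) (sub b ∪ sub z0) := by
        intro e he
        simp only [sub, Finset.mem_union, Finset.mem_insert] at he ⊢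
        tauto
      have h2 := Finset.card_union_le (sub b) (sub z0)
      have h3 := Finset.card_insert_le (vc b z0) (sub b ∪ sub z0)
      have h4 : Nat.log 2 (n + 2) ≤ n + 2 := Nat.log_le_self _ _
      have h5 : Nat.log 2 1 = 0 := by simp
      have := Finset.card_le_card h1
      omega
  | succ k ih =>
    obtain ⟨d, zr, hd, hzr, hdok, hzrok, hcard⟩ := ih
    refine ⟨hc (vc d zr) (vc zr d), vc (hc zr zr) (hc zr zr), ?_, ?_, ?_, ?_, ?_⟩
    · rw [den_hc, den_vc, den_vc, hd, hzr, ← Dstr_succ]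
    · have hp : (2 : ℕ) ^ (k + 1) = 2 ^ k + 2 ^ k := by rw [pow_succ]; ring
      have hW : (2 : ℕ) ^ (k + 1) * (n + 2) = 2 ^ k * (n + 2) + 2 ^ k * (n + 2) := by
        rw [hp]; ring
      rw [den_vc, den_hc, hzr, hcat_crect, vcat_crect, hW, hp]
    · refine ⟨?_, ⟨?_, hdok, hzrok⟩, ⟨?_, hzrok, hdok⟩⟩
      · rw [den_vc, den_vc, vcat_h, vcat_h, hd, hzr]
        simp [Dstr]
        omega
      · rw [hd, hzr]; rfl
      · rw [hd, hzr]; rfl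
    · refine ⟨?_, ⟨?_, hzrok, hzrok⟩, ⟨?_, hzrok, hzrok⟩⟩
      · rfl
      · rfl
      · rfl
    · have h1 : sub (hc (vc d zr) (vc zr d)) ∪ sub (vc (hc zr zr) (hc zr zr)) ⊆
          insert (hc (vc d zr) (vc zr d)) (insert (vc (hc zr zr) (hc zr zr))
            (insert (vc d zr) (insert (vc zr d) (insert (hc zr zr)
              (sub d ∪ sub zr))))) := by
        intro e he
        simp only [sub, Finset.mem_union, Finset.mem_insert] at he ⊢
        tauto
      calc _ ≤ _ := Finset.card_le_card h1
        _ ≤ (sub d ∪ sub zr).card + 5 := card_insert5 _ _ _ _ _ _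
        _ ≤ 16 * n + 11 + 5 * (k + 1) := by omega

end Gadget

namespace Gadget
open E

@[simp] theorem shiftBin_h (n : ℕ) : (shiftBinStr n).h = 2 * 2 ^ n := rfl
@[simp] theorem shiftBin_w (n : ℕ) : (shiftBinStr n).w = 2 ^ n * (n + 2) := rfl

theorem log_W_le (n : ℕ) : Nat.log 2 (2 ^ n * (n + 2)) ≤ 2 * n + 3 := by
  have h1 : 2 ^ n * (n + 2) ≤ 2 ^ n * 2 ^ (n + 2) :=
    Nat.mul_le_mul_left _ (le_of_lt Nat.lt_two_pow_self)
  calc Nat.log 2 (2 ^ n * (n + 2)) ≤ Nat.log 2 (2 ^ n * 2 ^ (n + 2)) :=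
        Nat.log_mono_right h1
    _ = Nat.log 2 (2 ^ (n + (n + 2))) := by rw [← pow_add]
    _ = n + (n + 2) := Nat.log_pow (by norm_num) _
    _ ≤ 2 * n + 3 := by omega

@[simp] theorem RLb_hw : True := trivial
/-- The left block of `gadgetC`. -/
def Lb (n N : ℕ) : Str2 Alpha3 :=
  Str2.mk' N (2 ^ n * (n + 2)) fun r c =>
    if r < 2 * 2 ^ n * (N / (2 * 2 ^ n)) then (shiftBinStr n).f (r % (2 * 2 ^ n)) c
    else some Alpha3.zero

/-- The right block of `gadgetC` (in local coordinates). -/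
def Rb (n N : ℕ) : Str2 Alpha3 :=
  Str2.mk' N (2 ^ n * (n + 2)) fun r c =>
    if 2 ^ n ≤ r ∧ r < 2 ^ n + 2 * 2 ^ n * ((N - 2 ^ n) / (2 * 2 ^ n)) then
      (shiftBinStr n).f ((r - 2 ^ n) % (2 * 2 ^ n)) c
    else some Alpha3.zero

@[simp] theorem Lb_h (n N : ℕ) : (Lb n N).h = N := rfl
@[simp] theorem Lb_w (n N : ℕ) : (Lb n N).w = 2 ^ n * (n + 2) := rfl
@[simp] theorem Rb_h (n N : ℕ) : (Rb n N).h = N := rfl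
@[simp] theorem Rb_w (n N : ℕ) : (Rb n N).w = 2 ^ n * (n + 2) := rfl

theorem exists_Lb (n N : ℕ) (hN : 1 ≤ N) :
    ∃ x : E Alpha3, den x = Lb n N ∧ Ok x ∧
      (sub x).card ≤ 25 * n + 25 + 4 * Nat.log 2 N := by
  obtain ⟨d, zr, hd, hzr, hdok, hzrok, hcard⟩ := exists_D n n
  have hdS : den d = shiftBinStr n := by rw [hd, shiftBin_eq_Dstr]
  have hdcard : (sub d).card ≤ 21 * n + 11 := by
    have h := Finset.card_le_card (Finset.subset_union_left : sub d ⊆ sub d ∪ sub zr)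
    omega
  have hW1 : 1 ≤ 2 ^ n * (n + 2) := by
    have : 0 < 2 ^ n * (n + 2) := by positivity
    omega
  have hlogW := log_W_le n
  set q := N / (2 * 2 ^ n) with hq
  have hNq : 2 * 2 ^ n * q ≤ N := by
    rw [hq, mul_comm]
    exact Nat.div_mul_le_self N _
  have hlogq : Nat.log 2 q ≤ Nat.log 2 N :=
    Nat.log_mono_right (by rw [hq]; exact Nat.div_le_self _ _)
  rcases Nat.eq_zero_or_pos q with hq0 | hq1
  · obtain ⟨x, hx, hxok, hxcard⟩ :=
      exists_crect Alpha3.zero N (2 ^ n * (n + 2)) hN hW1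
    refine ⟨x, ?_, hxok, ?_⟩
    · rw [hx]
      refine Str2.ext' rfl rfl fun r c => ?_
      simp only [crect, Lb, Str2.mk', ← hq, hq0, Nat.mul_zero]
      by_cases h : r < N ∧ c < 2 ^ n * (n + 2)
      · rw [if_pos h, if_pos h, if_neg (by omega)]
      · rw [if_neg h, if_neg h]
    · omega
  · obtain ⟨p, hp, hpok, hpsub, hpcard⟩ := exists_vpow d hdok q hq1
    have hpS : den p = vrep (shiftBinStr n) q := by rw [hp, hdS]
    have hcomm : q * (2 * 2 ^ n) = 2 * 2 ^ n * q := mul_comm _ _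
    rcases Nat.eq_zero_or_pos (N - 2 * 2 ^ n * q) with hr0 | hr1
    · refine ⟨p, ?_, hpok, by omega⟩
      rw [hpS]
      refine Str2.ext' (by simp only [vrep_h, shiftBin_h, Lb_h, Rb_h]; omega) rfl fun r c => ?_
      simp only [vrep, Lb, Str2.mk', ← hq]
      rw [shiftBin_h, shiftBin_w]
      by_cases h : r < N ∧ c < 2 ^ n * (n + 2)
      · rw [if_pos (by omega : r < q * (2 * 2 ^ n) ∧ c < 2 ^ n * (n + 2)),
          if_pos h, if_pos (by omega : r < 2 * 2 ^ n * q)]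
      · rw [if_neg (by omega : ¬(r < q * (2 * 2 ^ n) ∧ c < 2 ^ n * (n + 2))),
          if_neg h]
    · obtain ⟨z2, hz2, hz2ok, hz2card⟩ :=
        exists_crect Alpha3.zero (N - 2 * 2 ^ n * q) (2 ^ n * (n + 2)) hr1 hW1
      have hlogrem : Nat.log 2 (N - 2 * 2 ^ n * q) ≤ Nat.log 2 N :=
        Nat.log_mono_right (by omega)
      refine ⟨vc p z2, ?_, ⟨?_, hpok, hz2ok⟩, ?_⟩
      · rw [den_vc, hpS, hz2]
        refine Str2.ext' (by simp only [vcat_h, vrep_h, crect_h, shiftBin_h, Lb_h, Rb_h]; omega)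
          rfl fun r c => ?_
        simp only [vrep, Lb, Str2.vcat, crect, Str2.mk',
          mk'_h, mk'_w, crect_h, crect_w, vrep_h, vrep_w, ← hq]
        rw [shiftBin_h, shiftBin_w]
        by_cases h : r < N ∧ c < 2 ^ n * (n + 2)
        swap
        · rw [if_neg (by omega), if_neg h]
        rw [if_pos (by omega : r < q * (2 * 2 ^ n) + (N - 2 * 2 ^ n * q) ∧
            c < 2 ^ n * (n + 2)), if_pos h]
        by_cases hr : r < q * (2 * 2 ^ n)
        · rw [if_pos hr, if_pos (by omega : r < q * (2 * 2 ^ n) ∧ c < 2 ^ n * (n + 2)),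
            if_pos (by omega : r < 2 * 2 ^ n * q)]
        · rw [if_neg hr, if_pos (by omega : r - q * (2 * 2 ^ n) < N - 2 * 2 ^ n * q ∧
              c < 2 ^ n * (n + 2)), if_neg (by omega : ¬r < 2 * 2 ^ n * q)]
      · rw [hpS, hz2]; rfl
      · have := card_sub_vc p z2
        omega

theorem exists_Rb (n N : ℕ) (hN : 1 ≤ N) :
    ∃ x : E Alpha3, den x = Rb n N ∧ Ok x ∧
      (sub x).card ≤ 35 * n + 40 + 4 * Nat.log 2 N := by
  obtain ⟨d, zr, hd, hzr, hdok, hzrok, hcard⟩ := exists_D n n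
  have hdS : den d = shiftBinStr n := by rw [hd, shiftBin_eq_Dstr]
  have hdcard : (sub d).card ≤ 21 * n + 11 := by
    have h := Finset.card_le_card (Finset.subset_union_left : sub d ⊆ sub d ∪ sub zr)
    omega
  have hW1 : 1 ≤ 2 ^ n * (n + 2) := by
    have : 0 < 2 ^ n * (n + 2) := by positivity
    omega
  have hlogW := log_W_le n
  set q := (N - 2 ^ n) / (2 * 2 ^ n) with hq
  have hNq : 2 * 2 ^ n * q ≤ N - 2 ^ n := by
    rw [hq, mul_comm]
    exact Nat.div_mul_le_self _ _
  have hlogq : Nat.log 2 q ≤ Nat.log 2 N :=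
    Nat.log_mono_right (hq ▸ le_trans (Nat.div_le_self _ _) (Nat.sub_le _ _))
  rcases Nat.eq_zero_or_pos q with hq0 | hq1
  · obtain ⟨x, hx, hxok, hxcard⟩ :=
      exists_crect Alpha3.zero N (2 ^ n * (n + 2)) hN hW1
    refine ⟨x, ?_, hxok, ?_⟩
    · rw [hx]
      refine Str2.ext' rfl rfl fun r c => ?_
      simp only [crect, Rb, Str2.mk', ← hq, hq0, Nat.mul_zero]
      by_cases h : r < N ∧ c < 2 ^ n * (n + 2)
      · rw [if_pos h, if_pos h, if_neg (by omega)]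
      · rw [if_neg h, if_neg h]
    · omega
  · have hN3 : 2 ^ n + 2 * 2 ^ n * q ≤ N := by
      have h1 : 2 * 2 ^ n * q ≥ 2 * 2 ^ n * 1 := Nat.mul_le_mul_left _ hq1
      omega
    obtain ⟨p, hp, hpok, hpsub, hpcard⟩ := exists_vpow d hdok q hq1
    have hpS : den p = vrep (shiftBinStr n) q := by rw [hp, hdS]
    have hcomm : q * (2 * 2 ^ n) = 2 * 2 ^ n * q := mul_comm _ _
    obtain ⟨t, ht, htok, htcard⟩ :=
      exists_crect Alpha3.zero (2 ^ n) (2 ^ n * (n + 2)) Nat.one_le_two_pow hW1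
    have hlog2n : Nat.log 2 (2 ^ n) = n := Nat.log_pow (by norm_num) n
    rcases Nat.eq_zero_or_pos (N - 2 ^ n - 2 * 2 ^ n * q) with hr0 | hr1
    · refine ⟨vc t p, ?_, ⟨?_, htok, hpok⟩, ?_⟩
      · rw [den_vc, hpS, ht]
        refine Str2.ext' (by simp only [vcat_h, vrep_h, crect_h, shiftBin_h, Lb_h, Rb_h]; omega)
          rfl fun r c => ?_
        simp only [vrep, Rb, Str2.vcat, crect, Str2.mk',
          mk'_h, mk'_w, crect_h, crect_w, vrep_h, vrep_w, ← hq]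
        rw [shiftBin_h, shiftBin_w]
        by_cases h : r < N ∧ c < 2 ^ n * (n + 2)
        swap
        · rw [if_neg (by omega), if_neg h]
        rw [if_pos (by omega : r < 2 ^ n + q * (2 * 2 ^ n) ∧ c < 2 ^ n * (n + 2)),
          if_pos h]
        by_cases hr : r < 2 ^ n
        · rw [if_pos hr, if_pos (by omega : r < 2 ^ n ∧ c < 2 ^ n * (n + 2)),
            if_neg (by omega)]
        · rw [if_neg hr, if_pos (by omega : r - 2 ^ n < q * (2 * 2 ^ n) ∧
              c < 2 ^ n * (n + 2)),
            if_pos (by omega : 2 ^ n ≤ r ∧ r < 2 ^ n + 2 * 2 ^ n * q)]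
      · rw [hpS, ht]; rfl
      · have := card_sub_vc t p
        omega
    · obtain ⟨z3, hz3, hz3ok, hz3card⟩ :=
        exists_crect Alpha3.zero (N - 2 ^ n - 2 * 2 ^ n * q) (2 ^ n * (n + 2)) hr1 hW1
      have hlogrem : Nat.log 2 (N - 2 ^ n - 2 * 2 ^ n * q) ≤ Nat.log 2 N :=
        Nat.log_mono_right (le_trans (Nat.sub_le _ _) (Nat.sub_le _ _))
      refine ⟨vc t (vc p z3), ?_, ⟨?_, htok, ?_, hpok, hz3ok⟩, ?_⟩
      · rw [den_vc, den_vc, hpS, ht, hz3]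
        refine Str2.ext'
          (by simp only [vcat_h, vrep_h, crect_h, shiftBin_h, Lb_h, Rb_h]; omega)
          rfl fun r c => ?_
        simp only [vrep, Rb, Str2.vcat, crect, Str2.mk',
          mk'_h, mk'_w, crect_h, crect_w, vrep_h, vrep_w, vcat_h, vcat_w, ← hq]
        rw [shiftBin_h, shiftBin_w]
        by_cases h : r < N ∧ c < 2 ^ n * (n + 2)
        swap
        · rw [if_neg (by omega), if_neg h]
        rw [if_pos (by omega : r < 2 ^ n + (q * (2 * 2 ^ n) +
            (N - 2 ^ n - 2 * 2 ^ n * q)) ∧ c < 2 ^ n * (n + 2)), if_pos h]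
        by_cases hr : r < 2 ^ n
        · rw [if_pos hr, if_pos (by omega : r < 2 ^ n ∧ c < 2 ^ n * (n + 2)),
            if_neg (by omega)]
        · rw [if_neg hr, if_pos (by omega : r - 2 ^ n < q * (2 * 2 ^ n) +
              (N - 2 ^ n - 2 * 2 ^ n * q) ∧ c < 2 ^ n * (n + 2))]
          by_cases hr2 : r - 2 ^ n < q * (2 * 2 ^ n)
          · rw [if_pos hr2, if_pos (by omega : r - 2 ^ n < q * (2 * 2 ^ n) ∧
                c < 2 ^ n * (n + 2)),
              if_pos (by omega : 2 ^ n ≤ r ∧ r < 2 ^ n + 2 * 2 ^ n * q)]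
          · rw [if_neg hr2, if_pos (by omega : r - 2 ^ n - q * (2 * 2 ^ n) <
                N - 2 ^ n - 2 * 2 ^ n * q ∧ c < 2 ^ n * (n + 2)),
              if_neg (by omega : ¬(2 ^ n ≤ r ∧ r < 2 ^ n + 2 * 2 ^ n * q))]
      · rw [ht, den_vc, hpS]; rfl
      · rw [hpS, hz3]; rfl
      · have h1 := card_sub_vc p z3
        have h2 := card_sub_vc t (vc p z3)
        omega

end Gadget

namespace Gadget
open E

theorem gadgetC_eq_two (N M : ℕ) (h : 2 * (2 ^ mExp M * (mExp M + 2)) = M) :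
    gadgetC N M = (Lb (mExp M) N).hcat (Rb (mExp M) N) := by
  refine Str2.ext' rfl ?_ fun r c => ?_
  · simp only [gadgetC, hcat_w, Lb_w, Rb_w, mk'_w]
    omega
  · simp only [gadgetC, Lb, Rb, Str2.hcat, Str2.mk', mk'_h, mk'_w, Lb_h, Lb_w,
      Rb_h, Rb_w, hcat_h, hcat_w]
    by_cases hin : r < N ∧ c < M
    swap
    · rw [if_neg hin, if_neg (by omega)]
    obtain ⟨hr, hc⟩ := hin
    rw [if_pos ⟨hr, hc⟩, if_pos (⟨hr, by omega⟩ :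
      r < N ∧ c < 2 ^ mExp M * (mExp M + 2) + 2 ^ mExp M * (mExp M + 2))]
    by_cases hcW : c < 2 ^ mExp M * (mExp M + 2)
    · rw [if_pos hcW, if_pos hcW,
        if_pos (⟨hr, hcW⟩ : r < N ∧ c < 2 ^ mExp M * (mExp M + 2))]
    · rw [if_neg hcW, if_neg hcW,
        if_pos (by omega : c < 2 * (2 ^ mExp M * (mExp M + 2))),
        if_pos (⟨hr, by omega⟩ :
          r < N ∧ c - 2 ^ mExp M * (mExp M + 2) < 2 ^ mExp M * (mExp M + 2))]

theorem gadgetC_eq_three (N M : ℕ) (h : 2 * (2 ^ mExp M * (mExp M + 2)) < M) :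
    gadgetC N M = (Lb (mExp M) N).hcat ((Rb (mExp M) N).hcat
      (crect Alpha3.zero N (M - 2 * (2 ^ mExp M * (mExp M + 2))))) := by
  refine Str2.ext' rfl ?_ fun r c => ?_
  · simp only [gadgetC, hcat_w, Lb_w, Rb_w, crect_w, mk'_w]
    omega
  · simp only [gadgetC, Lb, Rb, Str2.hcat, crect, Str2.mk', mk'_h, mk'_w, Lb_h,
      Lb_w, Rb_h, Rb_w, hcat_h, hcat_w, crect_h, crect_w]
    by_cases hin : r < N ∧ c < M
    swap
    · rw [if_neg hin, if_neg (by omega)]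
    obtain ⟨hr, hc⟩ := hin
    rw [if_pos ⟨hr, hc⟩, if_pos (⟨hr, by omega⟩ : r < N ∧
      c < 2 ^ mExp M * (mExp M + 2) + (2 ^ mExp M * (mExp M + 2) +
        (M - 2 * (2 ^ mExp M * (mExp M + 2)))))]
    by_cases hcW : c < 2 ^ mExp M * (mExp M + 2)
    · rw [if_pos hcW, if_pos hcW,
        if_pos (⟨hr, hcW⟩ : r < N ∧ c < 2 ^ mExp M * (mExp M + 2))]
    · rw [if_neg hcW, if_neg hcW,
        if_pos (⟨hr, by omega⟩ : r < N ∧ c - 2 ^ mExp M * (mExp M + 2) <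
          2 ^ mExp M * (mExp M + 2) + (M - 2 * (2 ^ mExp M * (mExp M + 2))))]
      by_cases hc2W : c < 2 * (2 ^ mExp M * (mExp M + 2))
      · rw [if_pos hc2W,
          if_pos (by omega : c - 2 ^ mExp M * (mExp M + 2) <
            2 ^ mExp M * (mExp M + 2)),
          if_pos (⟨hr, by omega⟩ : r < N ∧
            c - 2 ^ mExp M * (mExp M + 2) < 2 ^ mExp M * (mExp M + 2))]
      · rw [if_neg hc2W,
          if_neg (by omega : ¬(c - 2 ^ mExp M * (mExp M + 2) <
            2 ^ mExp M * (mExp M + 2))),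
          if_pos (⟨hr, by omega⟩ : r < N ∧
            c - 2 ^ mExp M * (mExp M + 2) - 2 ^ mExp M * (mExp M + 2) <
              M - 2 * (2 ^ mExp M * (mExp M + 2)))]

theorem main (N M : ℕ) (hN : 1 ≤ N) (hM : 4 ≤ M) :
    ∃ G : SLP2 Alpha3, G.WF ∧ G.exp = gadgetC N M ∧
      G.size ≤ 400 * (Nat.log 2 N + Nat.log 2 M) := by
  have hP : 2 * 2 ^ mExp M * (mExp M + 2) ≤ M := by
    unfold mExp
    exact Nat.findGreatest_spec (P := fun m => 2 * 2 ^ m * (m + 2) ≤ M)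
      (Nat.zero_le M) (by simp only [pow_zero]; omega)
  have hassoc : 2 * 2 ^ mExp M * (mExp M + 2) =
      2 * (2 ^ mExp M * (mExp M + 2)) := mul_assoc _ _ _
  have hnM : mExp M ≤ Nat.log 2 M := by
    have h1 : 2 ^ mExp M ≤ M := by
      calc 2 ^ mExp M ≤ 2 ^ mExp M * (2 * (mExp M + 2)) :=
            Nat.le_mul_of_pos_right _ (by omega)
        _ = 2 * 2 ^ mExp M * (mExp M + 2) := by ring
        _ ≤ M := hP
    calc mExp M = Nat.log 2 (2 ^ mExp M) := (Nat.log_pow (by norm_num) _).symm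
      _ ≤ Nat.log 2 M := Nat.log_mono_right h1
  have hlogM2 : 2 ≤ Nat.log 2 M := by
    have h4 : Nat.log 2 4 = 2 :=
      Nat.log_eq_of_pow_le_of_lt_pow (by norm_num) (by norm_num)
    calc 2 = Nat.log 2 4 := h4.symm
      _ ≤ Nat.log 2 M := Nat.log_mono_right hM
  obtain ⟨lb, hlb, hlbok, hlbcard⟩ := exists_Lb (mExp M) N hN
  obtain ⟨rb, hrb, hrbok, hrbcard⟩ := exists_Rb (mExp M) N hN
  rcases Nat.lt_or_ge (2 * (2 ^ mExp M * (mExp M + 2))) M with hlt | hge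
  · obtain ⟨pd, hpd, hpdok, hpdcard⟩ :=
      exists_crect Alpha3.zero N (M - 2 * (2 ^ mExp M * (mExp M + 2))) hN (by omega)
    have hpadlog : Nat.log 2 (M - 2 * (2 ^ mExp M * (mExp M + 2))) ≤ Nat.log 2 M :=
      Nat.log_mono_right (Nat.sub_le _ _)
    have hok : Ok (hc lb (hc rb pd)) := by
      refine ⟨?_, hlbok, ?_, hrbok, hpdok⟩
      · rw [hlb, den_hc, hcat_h, hrb]
        rfl
      · rw [hrb, hpd]
        rfl
    obtain ⟨G, hGwf, hGexp, hGsize⟩ := exists_slp (hc lb (hc rb pd)) hok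
    refine ⟨G, hGwf, ?_, ?_⟩
    · rw [hGexp, den_hc, den_hc, hlb, hrb, hpd, ← gadgetC_eq_three N M hlt]
    · have h1 := card_sub_hc rb pd
      have h2 := card_sub_hc lb (hc rb pd)
      omega
  · have heq : 2 * (2 ^ mExp M * (mExp M + 2)) = M := by omega
    have hok : Ok (hc lb rb) := by
      refine ⟨?_, hlbok, hrbok⟩
      rw [hlb, hrb]
      rfl
    obtain ⟨G, hGwf, hGexp, hGsize⟩ := exists_slp (hc lb rb) hok
    refine ⟨G, hGwf, ?_, ?_⟩
    · rw [hGexp, den_hc, hlb, hrb, ← gadgetC_eq_two N M heq]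
    · have h2 := card_sub_hc lb rb
      omega

end Gadget

/-- There is an absolute constant `c > 0` such that for all
integers `N ≥ 1` and `M ≥ 4`, there is a 2D SLP of size at most
`c * (log₂ N + log₂ M)` deriving the 2D string `C_{N,M}`. -/
theorem gadget_small_slp :
    ∃ c : ℕ, 0 < c ∧ ∀ N M : ℕ, 1 ≤ N → 4 ≤ M →
      ∃ G : SLP2 Alpha3, G.WF ∧ G.exp = gadgetC N M ∧
        G.size ≤ c * (Nat.log 2 N + Nat.log 2 M) :=
  ⟨400, by norm_num, fun N M hN hM => Gadget.main N M hN hM⟩
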